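/- Let α > 0 and suppose φ_1 ∈ H satisfies φ_1(k) > 0 for all k ∈ {1, ..., T} and Σ_{k=1}^{T+1} |φ_1(k) - φ_1(k-1)|^p = λ_{1,p} Σ_{k=1}^{T} φ_1(k)^p, where λ_{1,p} > 0. Suppose there exists δ > 0 such that F_k(ξ) > (λ_{1,p} / (p α)) ξ^p for every k ∈ {1, ..., T} and every ξ ∈ (0, δ). Then for every ζ with 0 < ζ < δ / max_{k ∈ {1,...,T}} φ_1(k), the function θ_ζ := ζ φ_1 satisfies J_α(θ_ζ) := (1/p) Σ_{k=1}^{T+1} |θ_ζ(k) - θ_ζ(k-1)|^p - α Σ_{k=1}^{T} F_k(θ_ζ(k)) < 0. -/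

import Mathlib

open Real

/-- final step of the proof of Theorem `Esistenza2`.  If `φ₁ ∈ H` is
positive on `ℤ[1,T]` with `∑_{k=1}^{T+1} |Δφ₁(k-1)|^p = λ₁ ∑_{k=1}^T φ₁(k)^p`, `λ₁ > 0`,
`α > 0`, and `F k ξ > (λ₁/(pα)) ξ^p` for all `k ∈ ℤ[1,T]` and `ξ ∈ (0,δ)`, then for every
`ζ ∈ (0, δ / max_k φ₁(k))` the function `θ_ζ = ζ φ₁` satisfies `J_α(θ_ζ) < 0`. -/
theorem energy_negative_along_eigenfunction
    (T : ℕ) (hT : 2 ≤ T) (p : ℝ) (hp : 1 < p)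
    (f : ℕ → ℝ → ℝ)
    (hf_cont : ∀ k ∈ Finset.Icc 1 T, ContinuousOn (f k) (Set.Ici 0))
    (hf_nonneg : ∀ k ∈ Finset.Icc 1 T, ∀ ξ : ℝ, 0 ≤ ξ → 0 ≤ f k ξ)
    (F : ℕ → ℝ → ℝ) (hF : ∀ k : ℕ, ∀ ξ : ℝ, F k ξ = ∫ s in (0:ℝ)..ξ, f k s)
    (α : ℝ) (hα : 0 < α)
    (lam : ℝ) (hlam : 0 < lam)
    (φ₁ : ℕ → ℝ) (hφ₁0 : φ₁ 0 = 0) (hφ₁T : φ₁ (T + 1) = 0)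
    (hφ₁pos : ∀ k ∈ Finset.Icc 1 T, 0 < φ₁ k)
    (hφ₁eq : ∑ k ∈ Finset.Icc 1 (T + 1), |φ₁ k - φ₁ (k - 1)| ^ p =
      lam * ∑ k ∈ Finset.Icc 1 T, (φ₁ k) ^ p)
    (δ : ℝ) (hδ : 0 < δ)
    (hFgt : ∀ k ∈ Finset.Icc 1 T, ∀ ξ ∈ Set.Ioo (0 : ℝ) δ,
      (lam / (p * α)) * ξ ^ p < F k ξ)
    (ζ : ℝ) (hζ0 : 0 < ζ)
    (hζδ : ζ < δ / ((Finset.Icc 1 T).sup' (Finset.nonempty_Icc.mpr (by omega)) φ₁)) :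
    (1 / p) * ∑ k ∈ Finset.Icc 1 (T + 1), |ζ * φ₁ k - ζ * φ₁ (k - 1)| ^ p
      - α * ∑ k ∈ Finset.Icc 1 T, F k (ζ * φ₁ k) < 0 := by
  have hne : (Finset.Icc 1 T).Nonempty := Finset.nonempty_Icc.mpr (by omega)
  set M := (Finset.Icc 1 T).sup' (Finset.nonempty_Icc.mpr (by omega : (1:ℕ) ≤ T)) φ₁ with hM
  have hMpos : 0 < M := by
    obtain ⟨k, hk⟩ := hne
    exact lt_of_lt_of_le (hφ₁pos k hk) (Finset.le_sup' φ₁ hk)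
  have hζM : ζ * M < δ := by
    rw [lt_div_iff₀ hMpos] at hζδ; linarith
  have hmem : ∀ k ∈ Finset.Icc 1 T, ζ * φ₁ k ∈ Set.Ioo (0:ℝ) δ := by
    intro k hk
    constructor
    · exact mul_pos hζ0 (hφ₁pos k hk)
    · calc ζ * φ₁ k ≤ ζ * M := by
            exact mul_le_mul_of_nonneg_left (Finset.le_sup' φ₁ hk) hζ0.le
        _ < δ := hζM
  have hp0 : (0:ℝ) < p := lt_trans one_pos hp
  -- first sum rewrite
  have h1 : ∑ k ∈ Finset.Icc 1 (T + 1), |ζ * φ₁ k - ζ * φ₁ (k - 1)| ^ p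
      = ζ ^ p * ∑ k ∈ Finset.Icc 1 (T + 1), |φ₁ k - φ₁ (k - 1)| ^ p := by
    rw [Finset.mul_sum]
    refine Finset.sum_congr rfl fun k _ => ?_
    rw [← mul_sub, abs_mul, abs_of_pos hζ0,
      Real.mul_rpow hζ0.le (abs_nonneg _)]
  -- second sum lower bound
  have h2 : ∑ k ∈ Finset.Icc 1 T, (lam / (p * α)) * (ζ * φ₁ k) ^ p
      < ∑ k ∈ Finset.Icc 1 T, F k (ζ * φ₁ k) := by
    refine Finset.sum_lt_sum_of_nonempty hne fun k hk => ?_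
    exact hFgt k hk _ (hmem k hk)
  have h3 : ∑ k ∈ Finset.Icc 1 T, (lam / (p * α)) * (ζ * φ₁ k) ^ p
      = (lam / (p * α)) * ζ ^ p * ∑ k ∈ Finset.Icc 1 T, (φ₁ k) ^ p := by
    rw [Finset.mul_sum]
    refine Finset.sum_congr rfl fun k hk => ?_
    rw [Real.mul_rpow hζ0.le (hφ₁pos k hk).le]; ring
  rw [h1, hφ₁eq]
  have hαF : α * ((lam / (p * α)) * ζ ^ p * ∑ k ∈ Finset.Icc 1 T, (φ₁ k) ^ p)
      < α * ∑ k ∈ Finset.Icc 1 T, F k (ζ * φ₁ k) := by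
    apply mul_lt_mul_of_pos_left _ hα
    rw [← h3]; exact h2
  have hfield : α * ((lam / (p * α)) * ζ ^ p * ∑ k ∈ Finset.Icc 1 T, (φ₁ k) ^ p)
      = (1 / p) * (ζ ^ p * (lam * ∑ k ∈ Finset.Icc 1 T, (φ₁ k) ^ p)) := by
    field_simp
  rw [hfield] at hαF
  linarith
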